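/- Let ρ : [a,b] → ℝ be integrable with 0 < ρ_min ≤ ρ(x) ≤ ρ_max < ∞ for all x ∈ [a,b], where a < b. Then the weighted average A = (∫_a^b z ρ(z) dz) / (∫_a^b ρ(z) dz) satisfies a < (b + a·√(ρ_max/ρ_min)) / (1 + √(ρ_max/ρ_min)) ≤ A. -/

import Mathlib

open MeasureTheory intervalIntegral Real

theorem stmt_1 (a b ρmin ρmax : ℝ) (ρ : ℝ → ℝ)
    (hab : a < b) (hρmin : 0 < ρmin) (hρmax : ρmin ≤ ρmax)
    (hint : IntegrableOn ρ (Set.Icc a b))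
    (hbd : ∀ x ∈ Set.Icc a b, ρmin ≤ ρ x ∧ ρ x ≤ ρmax) :
    a < (b + a * Real.sqrt (ρmax / ρmin)) / (1 + Real.sqrt (ρmax / ρmin)) ∧
    (b + a * Real.sqrt (ρmax / ρmin)) / (1 + Real.sqrt (ρmax / ρmin)) ≤
      (∫ z in a..b, z * ρ z) / (∫ z in a..b, ρ z) := by
  have hρmax0 : 0 < ρmax := lt_of_lt_of_le hρmin hρmax
  set r := Real.sqrt (ρmax / ρmin) with hrdef
  have hr0 : 0 < r := Real.sqrt_pos.mpr (by positivity)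
  have hr2 : r ^ 2 = ρmax / ρmin := Real.sq_sqrt (by positivity)
  clear_value r
  have hr2' : ρmin * r ^ 2 = ρmax := by
    rw [hr2]; field_simp
  have h1r : (0:ℝ) < 1 + r := by linarith
  set c := (b + a * r) / (1 + r) with hcdef
  have hc1 : c * (1 + r) = b + a * r := by
    rw [hcdef]; field_simp
  clear_value c
  have hca : a < c := by
    rw [hcdef, lt_div_iff₀ h1r]; nlinarith
  have hcb : c < b := by
    rw [hcdef, div_lt_iff₀ h1r]; nlinarith
  refine ⟨hca, ?_⟩
  have hac : a ≤ c := hca.le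
  have hcb' : c ≤ b := hcb.le
  have hiρ : IntervalIntegrable ρ volume a b := by
    rw [intervalIntegrable_iff_integrableOn_Icc_of_le hab.le]; exact hint
  have hiρ1 : IntervalIntegrable ρ volume a c :=
    hiρ.mono_set (by rw [Set.uIcc_of_le hac, Set.uIcc_of_le hab.le]; exact Set.Icc_subset_Icc le_rfl hcb')
  have hiρ2 : IntervalIntegrable ρ volume c b :=
    hiρ.mono_set (by rw [Set.uIcc_of_le hcb', Set.uIcc_of_le hab.le]; exact Set.Icc_subset_Icc hac le_rfl)
  have hcont : ∀ u v : ℝ, ContinuousOn (fun z : ℝ => z - c) (Set.uIcc u v) :=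
    fun u v => (continuous_id.sub continuous_const).continuousOn
  have hif1 : IntervalIntegrable (fun z => (z - c) * ρ z) volume a c :=
    hiρ1.continuousOn_mul (hcont a c)
  have hif2 : IntervalIntegrable (fun z => (z - c) * ρ z) volume c b :=
    hiρ2.continuousOn_mul (hcont c b)
  have hig : IntervalIntegrable (fun z => z * ρ z) volume a b :=
    hiρ.continuousOn_mul continuous_id.continuousOn
  have key1 : (∫ z in a..c, (z - c)) * ρmax ≤ ∫ z in a..c, (z - c) * ρ z := by
    rw [← intervalIntegral.integral_mul_const]
    apply intervalIntegral.integral_mono_on hac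
      (((continuous_id.sub continuous_const).mul continuous_const).intervalIntegrable a c) hif1
    intro x hx
    have hx' : x ∈ Set.Icc a b := ⟨hx.1, le_trans hx.2 hcb'⟩
    have := (hbd x hx').2
    have hxc : x - c ≤ 0 := by linarith [hx.2]
    simp only [Pi.mul_apply, Pi.sub_apply, id_eq]
    nlinarith
  have key2 : (∫ z in c..b, (z - c)) * ρmin ≤ ∫ z in c..b, (z - c) * ρ z := by
    rw [← intervalIntegral.integral_mul_const]
    apply intervalIntegral.integral_mono_on hcb'
      (((continuous_id.sub continuous_const).mul continuous_const).intervalIntegrable c b) hif2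
    intro x hx
    have hx' : x ∈ Set.Icc a b := ⟨le_trans hac hx.1, hx.2⟩
    have := (hbd x hx').1
    have hxc : 0 ≤ x - c := by linarith [hx.1]
    simp only [Pi.mul_apply, Pi.sub_apply, id_eq]
    nlinarith
  have e1 : (∫ z in a..c, (z - c)) = -((c - a) ^ 2 / 2) := by
    rw [intervalIntegral.integral_sub intervalIntegrable_id intervalIntegrable_const,
      integral_id, intervalIntegral.integral_const, smul_eq_mul]
    ring
  have e2 : (∫ z in c..b, (z - c)) = (b - c) ^ 2 / 2 := by
    rw [intervalIntegral.integral_sub intervalIntegrable_id intervalIntegrable_const,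
      integral_id, intervalIntegral.integral_const, smul_eq_mul]
    ring
  have hbal : ρmax * (c - a) ^ 2 = ρmin * (b - c) ^ 2 := by
    have h2 : (c - a) * (1 + r) = b - a := by linear_combination hc1
    have h3 : (b - c) * (1 + r) = r * (b - a) := by linear_combination (-1) * hc1
    have h4 : ρmax * ((c - a) * (1 + r)) ^ 2 = ρmin * ((b - c) * (1 + r)) ^ 2 := by
      rw [h2, h3]; linear_combination (-(b - a) ^ 2) * hr2'
    have h6 : (ρmax * (c - a) ^ 2 - ρmin * (b - c) ^ 2) * (1 + r) ^ 2 = 0 := by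
      linear_combination h4
    rcases mul_eq_zero.mp h6 with h | h
    · linarith
    · exact absurd h (by positivity)
  have hsplit : (∫ z in a..c, (z - c) * ρ z) + (∫ z in c..b, (z - c) * ρ z)
      = ∫ z in a..b, (z - c) * ρ z :=
    intervalIntegral.integral_add_adjacent_intervals hif1 hif2
  have hnn : 0 ≤ ∫ z in a..b, (z - c) * ρ z := by
    rw [← hsplit]
    have hz : (∫ z in a..c, (z - c)) * ρmax + (∫ z in c..b, (z - c)) * ρmin = 0 := by
      rw [e1, e2]; nlinarith [hbal]
    linarith [key1, key2]
  have hlin : (∫ z in a..b, (z - c) * ρ z)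
      = (∫ z in a..b, z * ρ z) - c * (∫ z in a..b, ρ z) := by
    rw [← intervalIntegral.integral_const_mul,
      ← intervalIntegral.integral_sub hig (hiρ.const_mul c)]
    congr 1; ext z; ring
  have hpos : 0 < ∫ z in a..b, ρ z := by
    have h := intervalIntegral.integral_mono_on hab.le intervalIntegrable_const hiρ
      (fun x hx => (hbd x hx).1)
    rw [intervalIntegral.integral_const, smul_eq_mul] at h
    nlinarith
  rw [le_div_iff₀ hpos]
  linarith [hnn, hlin]
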